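/- Let m ≥ 4 and n = 2^m, and let the deletion probability be q = 1/2. If x and y are two distinct codewords of RM(m,1) that agree in their first bit (x_1 = y_1), then |E[R_x] − E[R_y]| ≥ 0.028, where E[R_x] denotes the expected total number of runs in a trace of x through the i.i.d. deletion channel with deletion probability 1/2. -/

import Mathlib

open Finset

/-- Number of deletions in a deletion pattern (number of `1`s in `ω`). -/
def wt {n : ℕ} (ω : Fin n → Bool) : ℕ := (univ.filter fun j => ω j = true).card

/-- Trace of `x` under deletion pattern `ω`: the subsequence of bits `x j`
at the positions `j` with `ω j = 0`, in increasing order of position. -/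
def trc {n : ℕ} (x ω : Fin n → Bool) : List Bool :=
  ((List.finRange n).filter fun j => ω j = false).map x

/-- Total number of runs (maximal blocks of equal bits) in a binary list. -/
def numRuns (l : List Bool) : ℕ := (l.destutter (· ≠ ·)).length

/-- Number of runs of `0`s in a binary list. -/
def numZeroRuns (l : List Bool) : ℕ := (l.destutter (· ≠ ·)).count false

/-- Number of runs of `1`s in a binary list. -/
def numOneRuns (l : List Bool) : ℕ := (l.destutter (· ≠ ·)).count true

/-! ### M1: numRuns cons lemma -/

lemma numRuns_nil : numRuns [] = 0 := rfl

lemma numRuns_cons (a : Bool) (s : List Bool) :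
    (numRuns (a :: s) : ℝ) = numRuns s + 1 - (if s.head? = some a then 1 else 0) := by
  cases s with
  | nil => simp [numRuns]
  | cons c t =>
      by_cases h : a = c
      · subst h
        have : List.destutter (· ≠ ·) (a :: a :: t) = List.destutter (· ≠ ·) (a :: t) := by
          rw [List.destutter_cons_cons, if_neg (by simp), List.destutter_cons']
        simp [numRuns, this]
      · have : List.destutter (· ≠ ·) (a :: c :: t) = a :: List.destutter (· ≠ ·) (c :: t) := by
          rw [List.destutter_cons_cons, if_pos h, List.destutter_cons']
        simp [numRuns, this, h, Ne.symm h]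

/-! ### M2: mask-sum statistics, defined recursively -/

noncomputable def hdC (b : Bool) : List Bool → ℝ
  | [] => 0
  | a :: t => hdC b t + if a = b then 2 ^ t.length else 0

noncomputable def lsC (b : Bool) : List Bool → ℝ
  | [] => 0
  | a :: t => 2 * lsC b t + if a = b then 1 else 0

noncomputable def AC : List Bool → ℝ
  | [] => 0
  | a :: t => 2 * AC t + 2 ^ t.length - hdC a t


lemma trc_succ {n : ℕ} (x ω : Fin (n+1) → Bool) :
    trc x ω = (if ω 0 = false then [x 0] else [])
      ++ trc (fun i => x i.succ) (fun i => ω i.succ) := by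
  unfold trc
  rw [List.finRange_succ, List.filter_cons]
  by_cases h : ω 0 = false
  · simp [h, List.filter_map, Function.comp_def]
  · simp [h, List.filter_map, Function.comp_def]

lemma sum_split {n : ℕ} (F : (Fin (n+1) → Bool) → ℝ) :
    ∑ ω : Fin (n+1) → Bool, F ω = ∑ b : Bool, ∑ ω' : Fin n → Bool, F (Fin.cons b ω') := by
  rw [← (Fin.consEquiv (fun _ : Fin (n+1) => Bool)).sum_comp F, Fintype.sum_prod_type]
  simp [Fin.consEquiv]

lemma card_fun_bool (n : ℕ) : (Finset.univ : Finset (Fin n → Bool)).card = 2 ^ n := by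
  simp

lemma trc_cons {n : ℕ} (x : Fin (n+1) → Bool) (b : Bool) (ω' : Fin n → Bool) :
    trc x (Fin.cons b ω') = (if b = false then [x 0] else [])
      ++ trc (fun i => x i.succ) ω' := by
  rw [trc_succ]
  have h0 : (Fin.cons b ω' : Fin (n+1) → Bool) 0 = b := rfl
  have h1 : (fun i : Fin n => (Fin.cons b ω' : Fin (n+1) → Bool) i.succ) = ω' := by
    funext i; simp
  rw [h0, h1]

lemma sum_head (n : ℕ) (x : Fin n → Bool) (b : Bool) :
    ∑ ω : Fin n → Bool, (if (trc x ω).head? = some b then (1:ℝ) else 0)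
      = hdC b (List.ofFn x) := by
  induction n with
  | zero => simp [trc, List.finRange, hdC]
  | succ n ih =>
    rw [sum_split, List.ofFn_succ]
    show _ = hdC b _
    rw [hdC]
    have htrue : ∀ ω' : Fin n → Bool,
        trc x (Fin.cons true ω') = trc (fun i => x i.succ) ω' := by
      intro ω'; rw [trc_cons]; simp
    have hfalse : ∀ ω' : Fin n → Bool,
        trc x (Fin.cons false ω') = x 0 :: trc (fun i => x i.succ) ω' := by
      intro ω'; rw [trc_cons]; simp
    rw [Fintype.sum_bool]
    simp only [htrue, hfalse, List.head?_cons]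
    rw [ih]
    have : ∑ _ω' : Fin n → Bool, (if some (x 0) = some b then (1:ℝ) else 0)
        = if x 0 = b then (2:ℝ) ^ n else 0 := by
      rw [Finset.sum_const, card_fun_bool]
      by_cases h : x 0 = b <;> simp [h]
    rw [this]
    have hlen : (List.ofFn fun i : Fin n => x i.succ).length = n := by simp
    rw [hlen]

lemma sum_numRuns (n : ℕ) (x : Fin n → Bool) :
    ∑ ω : Fin n → Bool, (numRuns (trc x ω) : ℝ) = AC (List.ofFn x) := by
  induction n with
  | zero => simp [trc, List.finRange, AC, numRuns]
  | succ n ih =>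
    rw [sum_split, List.ofFn_succ]
    show _ = AC _
    rw [AC]
    have htrue : ∀ ω' : Fin n → Bool,
        trc x (Fin.cons true ω') = trc (fun i => x i.succ) ω' := by
      intro ω'; rw [trc_cons]; simp
    have hfalse : ∀ ω' : Fin n → Bool,
        trc x (Fin.cons false ω') = x 0 :: trc (fun i => x i.succ) ω' := by
      intro ω'; rw [trc_cons]; simp
    rw [Fintype.sum_bool]
    simp only [htrue, hfalse]
    have hcons : ∀ ω' : Fin n → Bool,
        (numRuns (x 0 :: trc (fun i => x i.succ) ω') : ℝ)
        = numRuns (trc (fun i => x i.succ) ω') + 1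
          - (if (trc (fun i => x i.succ) ω').head? = some (x 0) then 1 else 0) :=
      fun ω' => numRuns_cons _ _
    simp only [hcons]
    rw [Finset.sum_sub_distrib, Finset.sum_add_distrib, ih, sum_head,
      Finset.sum_const, card_fun_bool]
    have hlen : (List.ofFn fun i : Fin n => x i.succ).length = n := by simp
    rw [hlen]
    ring
section M3
lemma hdC_append (b : Bool) (s t : List Bool) :
    hdC b (s ++ t) = 2 ^ t.length * hdC b s + hdC b t := by
  induction s with
  | nil => simp [hdC]
  | cons a s ih =>
      rw [List.cons_append, hdC, ih, hdC]
      by_cases h : a = b <;> simp [h, List.length_append] <;> ring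

lemma lsC_append (b : Bool) (s t : List Bool) :
    lsC b (s ++ t) = 2 ^ s.length * lsC b t + lsC b s := by
  induction s with
  | nil => simp [lsC]
  | cons a s ih =>
      rw [List.cons_append, lsC, ih, lsC]
      by_cases h : a = b <;> simp [h] <;> ring

lemma AC_append (s t : List Bool) :
    AC (s ++ t) = 2 ^ t.length * AC s + 2 ^ s.length * AC t
      - (lsC false s * hdC false t + lsC true s * hdC true t) := by
  induction s with
  | nil => simp [AC, lsC]
  | cons a s ih =>
      rw [List.cons_append, AC, ih, AC, hdC_append, lsC, lsC]
      cases a <;> simp [List.length_append] <;> ring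

lemma hdC_map_not (b : Bool) (l : List Bool) :
    hdC b (l.map not) = hdC (!b) l := by
  induction l with
  | nil => simp [hdC]
  | cons a l ih =>
      rw [List.map_cons, hdC, ih, hdC]
      cases a <;> cases b <;> simp

lemma lsC_map_not (b : Bool) (l : List Bool) :
    lsC b (l.map not) = lsC (!b) l := by
  induction l with
  | nil => simp [lsC]
  | cons a l ih =>
      rw [List.map_cons, lsC, ih, lsC]
      cases a <;> cases b <;> simp

lemma AC_map_not (l : List Bool) : AC (l.map not) = AC l := by
  induction l with
  | nil => simp [AC]
  | cons a l ih =>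
      rw [List.map_cons, AC, ih, hdC_map_not, AC]
      cases a <;> simp
end M3

section M4
open Finset
variable {m : ℕ} (u0 : Bool) (u : Fin m → Bool)

def Xc (t : ℕ) : Bool :=
  u0 ^^ decide ((univ.filter fun i : Fin m =>
    u i = true ∧ t.testBit (i : ℕ) = true).card % 2 = 1)

def Wl (k : ℕ) : List Bool := (List.range (2^k)).map (Xc u0 u)

lemma Xc_zero : Xc u0 u 0 = u0 := by
  have : (univ.filter fun i : Fin m =>
      u i = true ∧ Nat.testBit 0 (i : ℕ) = true) = ∅ := by
    ext i; simp [Nat.zero_testBit]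
  simp [Xc, this]

lemma Xc_add_pow {k : ℕ} (hk : k < m) {t : ℕ} (ht : t < 2^k) :
    Xc u0 u (2^k + t) = ((u ⟨k, hk⟩) ^^ Xc u0 u t) := by
  have hbit : ∀ i : Fin m, (i : ℕ) ≠ k →
      (2^k + t).testBit (i : ℕ) = t.testBit (i : ℕ) := by
    intro i hi
    rcases Nat.lt_or_ge (i : ℕ) k with h | h
    · exact Nat.testBit_two_pow_add_gt h t
    · have hik : k < (i : ℕ) := lt_of_le_of_ne h (Ne.symm hi)
      have h1 : 2^k + t < 2^(i : ℕ) := by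
        have h2 : 2^k + t < 2^(k+1) := by rw [pow_succ]; omega
        exact lt_of_lt_of_le h2 (Nat.pow_le_pow_right (by norm_num) hik)
      have h3 : t < 2^(i : ℕ) :=
        lt_of_lt_of_le ht (Nat.pow_le_pow_right (by norm_num) hik.le)
      rw [Nat.testBit_lt_two_pow h1, Nat.testBit_lt_two_pow h3]
  have hbitk : (2^k + t).testBit k = true := by
    rw [Nat.testBit_two_pow_add_eq, Nat.testBit_lt_two_pow ht]; rfl
  have hbitk' : t.testBit k = false := Nat.testBit_lt_two_pow ht
  set S := univ.filter fun i : Fin m => u i = true ∧ t.testBit (i : ℕ) = true with hS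
  set S' := univ.filter fun i : Fin m => u i = true ∧ (2^k+t).testBit (i : ℕ) = true with hS'
  have hkS : (⟨k, hk⟩ : Fin m) ∉ S := by
    simp [hS, hbitk']
  have hcard : S'.card = S.card + (if u ⟨k, hk⟩ = true then 1 else 0) := by
    by_cases hu : u ⟨k, hk⟩ = true
    · have : S' = insert ⟨k, hk⟩ S := by
        ext i
        by_cases hik : (i : ℕ) = k
        · have : i = ⟨k, hk⟩ := Fin.ext hik
          subst this
          simp [hS', hbitk, hu]
        · simp [hS', hS, hbit i hik, Fin.ext_iff, hik]
      rw [this, Finset.card_insert_of_notMem hkS, if_pos hu]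
    · have : S' = S := by
        ext i
        by_cases hik : (i : ℕ) = k
        · have : i = ⟨k, hk⟩ := Fin.ext hik
          subst this
          simp [hS', hS, hu]
        · simp [hS', hS, hbit i hik]
      rw [this, if_neg hu, Nat.add_zero]
  have hpar : decide (S'.card % 2 = 1)
      = ((u ⟨k, hk⟩) ^^ decide (S.card % 2 = 1)) := by
    rw [hcard]
    by_cases hu : u ⟨k, hk⟩ = true
    · rw [if_pos hu, hu]
      rcases Nat.even_or_odd S.card with he | ho
      · have h1 : S.card % 2 = 0 := Nat.even_iff.mp he
        have h2 : (S.card + 1) % 2 = 1 := by omega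
        simp [h1, h2]
      · have h1 : S.card % 2 = 1 := Nat.odd_iff.mp ho
        have h2 : (S.card + 1) % 2 = 0 := by omega
        simp [h1, h2]
    · have hu' : u ⟨k, hk⟩ = false := by simp_all
      rw [if_neg hu, Nat.add_zero, hu']
      simp
  unfold Xc
  rw [← hS, ← hS', hpar]
  cases u0 <;> cases u ⟨k, hk⟩ <;> cases (decide (S.card % 2 = 1)) <;> rfl

lemma Wl_succ {k : ℕ} (hk : k < m) :
    Wl u0 u (k+1) = Wl u0 u k ++
      (if u ⟨k, hk⟩ = true then (Wl u0 u k).map not else Wl u0 u k) := by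
  have h2 : 2^(k+1) = 2^k + 2^k := by ring
  rw [Wl, h2, List.range_add, List.map_append]
  congr 1
  rw [List.map_map]
  have : ∀ t ∈ List.range (2^k), (Xc u0 u ∘ fun x => 2^k + x) t
      = ((u ⟨k, hk⟩) ^^ Xc u0 u t) := by
    intro t ht
    exact Xc_add_pow u0 u hk (List.mem_range.mp ht)
  rw [List.map_congr_left this]
  by_cases hu : u ⟨k, hk⟩ = true
  · rw [if_pos hu, Wl, List.map_map]
    apply List.map_congr_left
    intro t _
    simp [hu, Bool.xor_comm]
  · rw [if_neg hu]
    have hu' : u ⟨k, hk⟩ = false := by simp_all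
    apply List.map_congr_left
    intro t _
    simp [hu']

lemma Wl_zero : Wl u0 u 0 = [u0] := by
  have : (2:ℕ)^0 = 1 := rfl
  rw [Wl, this, List.range_succ, List.range_zero, List.nil_append, List.map_cons, List.map_nil, Xc_zero]

lemma Wl_length (k : ℕ) : (Wl u0 u k).length = 2^k := by simp [Wl]
end M4

section M5
open Finset
variable {m : ℕ}

noncomputable def pwR (k : ℕ) : ℝ := 2 ^ (2^k)
noncomputable def epsR (k : ℕ) : ℝ := ((2:ℝ) ^ (2^k))⁻¹

def sgR (u : Fin m → Bool) (k : ℕ) : ℝ :=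
  if h : k < m then (if u ⟨k, h⟩ = true then -1 else 1) else 1

lemma pwR_pos (k : ℕ) : 0 < pwR k := by unfold pwR; positivity

lemma pwR_succ (k : ℕ) : pwR (k+1) = pwR k ^ 2 := by
  have h : 2^(k+1) = 2^k * 2 := by ring
  unfold pwR
  rw [h, pow_mul]

lemma epsR_mul_pwR (k : ℕ) : epsR k * pwR k = 1 := by
  unfold epsR pwR
  have h : ((2:ℝ)^(2^k)) ≠ 0 := by positivity
  rw [inv_mul_cancel₀ h]

lemma sgR_cases (u : Fin m → Bool) (k : ℕ) : sgR u k = 1 ∨ sgR u k = -1 := by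
  unfold sgR
  split_ifs with h1 h2
  · right; rfl
  · left; rfl
  · left; rfl

noncomputable def dH (u0 : Bool) (u : Fin m → Bool) (k : ℕ) : ℝ :=
  hdC true (Wl u0 u k) - hdC false (Wl u0 u k)
noncomputable def dL (u0 : Bool) (u : Fin m → Bool) (k : ℕ) : ℝ :=
  lsC true (Wl u0 u k) - lsC false (Wl u0 u k)
noncomputable def sH (u0 : Bool) (u : Fin m → Bool) (k : ℕ) : ℝ :=
  hdC true (Wl u0 u k) + hdC false (Wl u0 u k)
noncomputable def sL (u0 : Bool) (u : Fin m → Bool) (k : ℕ) : ℝ :=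
  lsC true (Wl u0 u k) + lsC false (Wl u0 u k)
noncomputable def aW (u0 : Bool) (u : Fin m → Bool) (k : ℕ) : ℝ := AC (Wl u0 u k)

variable (u0 : Bool) (u : Fin m → Bool)

lemma pow_len (k : ℕ) : (2:ℝ) ^ (Wl u0 u k).length = pwR k := by
  rw [Wl_length]; rfl

lemma dH_succ {k : ℕ} (hk : k < m) :
    dH u0 u (k+1) = (pwR k + sgR u k) * dH u0 u k := by
  unfold dH
  rw [Wl_succ u0 u hk, sgR, dif_pos hk]
  by_cases hu : u ⟨k, hk⟩ = true
  · rw [if_pos hu, if_pos hu, hdC_append, hdC_append, hdC_map_not, hdC_map_not,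
      List.length_map, pow_len]
    simp only [Bool.not_true, Bool.not_false]
    ring
  · rw [if_neg hu, if_neg hu, hdC_append, hdC_append, pow_len]
    ring

lemma dL_succ {k : ℕ} (hk : k < m) :
    dL u0 u (k+1) = (sgR u k * pwR k + 1) * dL u0 u k := by
  unfold dL
  rw [Wl_succ u0 u hk, sgR, dif_pos hk]
  by_cases hu : u ⟨k, hk⟩ = true
  · rw [if_pos hu, if_pos hu, lsC_append, lsC_append, lsC_map_not, lsC_map_not,
      Wl_length]
    show (2:ℝ)^(2^k) * _ + _ - ((2:ℝ)^(2^k) * _ + _) = _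
    have : ((2:ℝ)^(2^k)) = pwR k := rfl
    rw [this]
    simp only [Bool.not_true, Bool.not_false]
    ring
  · rw [if_neg hu, if_neg hu, lsC_append, lsC_append, Wl_length]
    show (2:ℝ)^(2^k) * _ + _ - ((2:ℝ)^(2^k) * _ + _) = _
    have : ((2:ℝ)^(2^k)) = pwR k := rfl
    rw [this]
    ring

lemma sH_succ {k : ℕ} (hk : k < m) :
    sH u0 u (k+1) = (pwR k + 1) * sH u0 u k := by
  unfold sH
  rw [Wl_succ u0 u hk]
  by_cases hu : u ⟨k, hk⟩ = true
  · rw [if_pos hu, hdC_append, hdC_append, hdC_map_not, hdC_map_not,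
      List.length_map, pow_len]
    simp only [Bool.not_true, Bool.not_false]
    ring
  · rw [if_neg hu, hdC_append, hdC_append, pow_len]
    ring

lemma sL_succ {k : ℕ} (hk : k < m) :
    sL u0 u (k+1) = (pwR k + 1) * sL u0 u k := by
  unfold sL
  rw [Wl_succ u0 u hk]
  have hp : ((2:ℝ)^(2^k)) = pwR k := rfl
  by_cases hu : u ⟨k, hk⟩ = true
  · rw [if_pos hu, lsC_append, lsC_append, lsC_map_not, lsC_map_not, Wl_length]
    show (2:ℝ)^(2^k) * _ + _ + ((2:ℝ)^(2^k) * _ + _) = _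
    rw [hp]
    simp only [Bool.not_true, Bool.not_false]
    ring
  · rw [if_neg hu, lsC_append, lsC_append, Wl_length]
    show (2:ℝ)^(2^k) * _ + _ + ((2:ℝ)^(2^k) * _ + _) = _
    rw [hp]; ring

lemma aW_succ {k : ℕ} (hk : k < m) :
    aW u0 u (k+1) = 2 * pwR k * aW u0 u k
      - (sL u0 u k * sH u0 u k + sgR u k * (dL u0 u k * dH u0 u k)) / 2 := by
  unfold aW
  rw [Wl_succ u0 u hk, sgR, dif_pos hk]
  by_cases hu : u ⟨k, hk⟩ = true
  · rw [if_pos hu, if_pos hu, AC_append, AC_map_not, hdC_map_not, hdC_map_not,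
      List.length_map, pow_len]
    unfold sL sH dL dH
    simp only [Bool.not_true, Bool.not_false]
    ring
  · rw [if_neg hu, if_neg hu, AC_append, pow_len]
    unfold sL sH dL dH
    ring

lemma hdC_single (b c : Bool) : hdC b [c] = if c = b then 1 else 0 := by
  rw [hdC, hdC]
  simp

lemma lsC_single (b c : Bool) : lsC b [c] = if c = b then 1 else 0 := by
  rw [lsC, lsC]
  simp

lemma dH_zero : dH u0 u 0 = if u0 = true then 1 else -1 := by
  unfold dH
  rw [Wl_zero, hdC_single, hdC_single]
  cases u0 <;> simp

lemma dL_zero : dL u0 u 0 = if u0 = true then 1 else -1 := by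
  unfold dL
  rw [Wl_zero, lsC_single, lsC_single]
  cases u0 <;> simp

lemma sH_zero : sH u0 u 0 = 1 := by
  unfold sH
  rw [Wl_zero, hdC_single, hdC_single]
  cases u0 <;> simp

lemma sL_zero : sL u0 u 0 = 1 := by
  unfold sL
  rw [Wl_zero, lsC_single, lsC_single]
  cases u0 <;> simp

lemma aW_zero : aW u0 u 0 = 1 := by
  unfold aW
  rw [Wl_zero]
  simp [AC, hdC]

lemma sH_closed {k : ℕ} (hk : k ≤ m) : sH u0 u k = pwR k - 1 := by
  induction k with
  | zero =>
      rw [sH_zero]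
      unfold pwR
      norm_num
  | succ k ih =>
      rw [sH_succ u0 u (by omega), ih (by omega), pwR_succ]
      ring

lemma sL_closed {k : ℕ} (hk : k ≤ m) : sL u0 u k = pwR k - 1 := by
  induction k with
  | zero =>
      rw [sL_zero]
      unfold pwR
      norm_num
  | succ k ih =>
      rw [sL_succ u0 u (by omega), ih (by omega), pwR_succ]
      ring

noncomputable def rhoP (u : Fin m → Bool) (k : ℕ) : ℝ :=
  ∏ j ∈ Finset.range k, (sgR u j * (1 + sgR u j * epsR j)^2)

lemma P_closed {k : ℕ} (hk : k ≤ m) :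
    dL u0 u k * dH u0 u k = pwR k ^ 2 / 4 * rhoP u k := by
  induction k with
  | zero =>
      rw [dL_zero, dH_zero]
      unfold rhoP pwR
      cases u0 <;> norm_num
  | succ k ih =>
      have hk' : k < m := by omega
      rw [dL_succ u0 u hk', dH_succ u0 u hk', pwR_succ]
      have hsg := sgR_cases u k
      have hpe := epsR_mul_pwR k
      have key : (sgR u k * pwR k + 1) * (pwR k + sgR u k)
          = sgR u k * (1 + sgR u k * epsR k)^2 * pwR k ^ 2 := by
        have hpw := pwR_pos k
        have heps : epsR k = (pwR k)⁻¹ := rfl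
        rcases hsg with h | h <;>
          · rw [h, heps]
            field_simp <;> ring
      calc (sgR u k * pwR k + 1) * dL u0 u k * ((pwR k + sgR u k) * dH u0 u k)
          = (sgR u k * pwR k + 1) * (pwR k + sgR u k) * (dL u0 u k * dH u0 u k) := by ring
        _ = sgR u k * (1 + sgR u k * epsR k)^2 * pwR k ^ 2 * (pwR k ^2/4 * rhoP u k) := by
            rw [key, ih (by omega)]
        _ = (pwR k ^2)^2/4 * rhoP u (k+1) := by
            unfold rhoP
            rw [Finset.prod_range_succ]
            ring

noncomputable def rho0 (u : Fin m → Bool) (k : ℕ) : ℝ := sgR u k * rhoP u k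

variable (ux uy : Fin m → Bool)

noncomputable def DD (k : ℕ) : ℝ := aW u0 ux k - aW u0 uy k
noncomputable def ee (k : ℕ) : ℝ := DD u0 ux uy k / pwR k

lemma ee_zero : ee u0 ux uy 0 = 0 := by
  unfold ee DD
  rw [aW_zero, aW_zero]
  simp

lemma ee_succ {k : ℕ} (hk : k < m) :
    ee u0 ux uy (k+1) = 2 * ee u0 ux uy k - (rho0 ux k - rho0 uy k) / 8 := by
  unfold ee DD
  rw [aW_succ u0 ux hk, aW_succ u0 uy hk, pwR_succ,
    P_closed u0 ux (le_of_lt hk), P_closed u0 uy (le_of_lt hk),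
    sH_closed u0 ux (le_of_lt hk), sH_closed u0 uy (le_of_lt hk),
    sL_closed u0 ux (le_of_lt hk), sL_closed u0 uy (le_of_lt hk)]
  have hpw := pwR_pos k
  unfold rho0
  field_simp
  ring

lemma ee_solve {k : ℕ} (hk : k ≤ m) :
    ee u0 ux uy k
      = -(1/8) * ∑ j ∈ Finset.range k, 2^(k-1-j) * (rho0 ux j - rho0 uy j) := by
  induction k with
  | zero => simp [ee_zero]
  | succ k ih =>
      rw [ee_succ u0 ux uy (by omega), ih (by omega), Finset.sum_range_succ]
      have hl : k + 1 - 1 - k = 0 := by omega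
      rw [hl, pow_zero, one_mul]
      have hsum : ∑ j ∈ Finset.range k, (2:ℝ)^(k+1-1-j) * (rho0 ux j - rho0 uy j)
          = 2 * ∑ j ∈ Finset.range k, (2:ℝ)^(k-1-j) * (rho0 ux j - rho0 uy j) := by
        rw [Finset.mul_sum]
        apply Finset.sum_congr rfl
        intro j hj
        have hj' : j < k := Finset.mem_range.mp hj
        have : k + 1 - 1 - j = (k - 1 - j) + 1 := by omega
        rw [this, pow_succ]
        ring
      rw [hsum]
      ring
end M5

section M6
open Finset

noncomputable def fF : ℕ → ℕ → (ℕ → ℝ) → ℝ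
  | _, 0, _ => 0
  | r, L+1, σ => σ r * (1 + (1 + σ r * epsR r)^2 * fF (r+1) L σ / 2)

noncomputable def Fm : ℕ → ℕ → ℝ
  | _, 0 => 0
  | r, L+1 => 1 + (1 + epsR r)^2 * Fm (r+1) L / 2

def IsSign (σ : ℕ → ℝ) : Prop := ∀ n, σ n = 1 ∨ σ n = -1

lemma epsR_pos (k : ℕ) : 0 < epsR k := by unfold epsR; positivity

lemma epsR_le_inv_pow {k n : ℕ} (h : n ≤ 2^k) : epsR k ≤ ((2:ℝ)^n)⁻¹ := by
  unfold epsR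
  apply inv_anti₀ (by positivity)
  exact pow_le_pow_right₀ (by norm_num) h

lemma epsR_le_half (k : ℕ) : epsR k ≤ 1/2 := by
  have := epsR_le_inv_pow (k := k) (n := 1) (Nat.one_le_two_pow)
  norm_num at this ⊢
  linarith

lemma epsR_lt_one (k : ℕ) : epsR k < 1 := lt_of_le_of_lt (epsR_le_half k) (by norm_num)

lemma epsR_succ (k : ℕ) : epsR (k+1) = epsR k ^ 2 := by
  have h : (2:ℝ)^(2^(k+1)) = ((2:ℝ)^(2^k))^2 := by
    rw [← pow_mul]
    congr 1
  unfold epsR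
  rw [h, inv_pow]

lemma epsR_le_quarter {k : ℕ} (hk : 1 ≤ k) : epsR k ≤ 1/4 := by
  have h : (2:ℕ) ≤ 2^k := by
    calc (2:ℕ) = 2^1 := rfl
    _ ≤ 2^k := Nat.pow_le_pow_right (by norm_num) hk
  have := epsR_le_inv_pow (k := k) h
  norm_num at this ⊢
  linarith

lemma epsR_le_sixteenth {k : ℕ} (hk : 2 ≤ k) : epsR k ≤ 1/16 := by
  have h : (4:ℕ) ≤ 2^k := by
    calc (4:ℕ) = 2^2 := rfl
    _ ≤ 2^k := Nat.pow_le_pow_right (by norm_num) hk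
  have := epsR_le_inv_pow (k := k) h
  norm_num at this ⊢
  linarith

lemma Fm_nonneg (L : ℕ) : ∀ r, 0 ≤ Fm r L := by
  induction L with
  | zero => intro r; rw [Fm]
  | succ L ih =>
      intro r
      rw [Fm]
      have h1 := ih (r+1)
      have h2 : (0:ℝ) ≤ (1 + epsR r)^2 := sq_nonneg _
      nlinarith

lemma Fm_le (L : ℕ) : ∀ r, Fm r L ≤ 2/(1 - epsR r) - 2*(1/2)^L := by
  induction L with
  | zero =>
      intro r
      rw [Fm]
      have h1 := epsR_pos r
      have h2 := epsR_lt_one r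
      rw [div_sub' (by linarith)]
      apply div_nonneg (by norm_num; linarith) (by linarith)
  | succ L ih =>
      intro r
      rw [Fm]
      have h1 := epsR_pos r
      have h2 := epsR_lt_one r
      have h3 := epsR_pos (r+1)
      have h4 := epsR_lt_one (r+1)
      have ihr := ih (r+1)
      have hsq : epsR (r+1) = epsR r ^ 2 := epsR_succ r
      have hc : (0:ℝ) < (1 + epsR r)^2 := by positivity
      have step1 : Fm r (L+1) ≤ 1 + (1 + epsR r)^2 * (2/(1 - epsR (r+1)) - 2*(1/2)^L) / 2 := by
        rw [Fm]
        have := mul_le_mul_of_nonneg_left ihr (le_of_lt hc)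
        linarith
      rw [Fm] at step1
      refine le_trans step1 ?_
      have hkey : 1 + (1 + epsR r)^2 * (2/(1 - epsR (r+1)) - 2*(1/2)^L) / 2
          = 2/(1 - epsR r) - (1 + epsR r)^2 * (1/2)^L := by
        rw [hsq]
        have hne : (1:ℝ) - epsR r ≠ 0 := by linarith
        have hne2 : (1:ℝ) - epsR r ^ 2 ≠ 0 := by nlinarith
        field_simp
        ring
      rw [hkey]
      have : (1:ℝ)*(1/2)^L ≤ (1 + epsR r)^2 * (1/2)^L := by
        apply mul_le_mul_of_nonneg_right _ (by positivity)
        nlinarith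
      have hh : ((1:ℝ)/2)^(L+1) * 2 = (1/2)^L := by
        rw [pow_succ]; ring
      linarith

lemma Fm_le' (L r : ℕ) : Fm r L ≤ 2/(1 - epsR r) := by
  have := Fm_le L r
  have : (0:ℝ) ≤ 2*(1/2)^L := by positivity
  linarith [Fm_le L r]

lemma Fm_le_32_15 (L : ℕ) {r : ℕ} (hr : 2 ≤ r) : Fm r L ≤ 32/15 := by
  have h1 := Fm_le' L r
  have h2 := epsR_le_sixteenth hr
  have h3 := epsR_pos r
  have : 2/(1 - epsR r) ≤ 2/(1 - 1/16) := by
    apply div_le_div_of_nonneg_left (by norm_num) (by linarith) (by linarith)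
  calc Fm r L ≤ 2/(1 - epsR r) := h1
    _ ≤ 2/(1 - 1/16) := this
    _ = 32/15 := by norm_num

lemma fF_abs_le {σ : ℕ → ℝ} (hσ : IsSign σ) (L : ℕ) : ∀ r, |fF r L σ| ≤ Fm r L := by
  induction L with
  | zero => intro r; rw [fF, Fm]; simp
  | succ L ih =>
      intro r
      rw [fF, Fm]
      have h1 := epsR_pos r
      have habs : |σ r| = 1 := by rcases hσ r with h | h <;> rw [h] <;> norm_num
      rw [abs_mul, habs, one_mul]
      have hc : (1 + σ r * epsR r)^2 ≤ (1 + epsR r)^2 := by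
        rcases hσ r with h | h <;> rw [h] <;> nlinarith
      have hc0 : (0:ℝ) ≤ (1 + σ r * epsR r)^2 := sq_nonneg _
      have hf := ih (r+1)
      have hFm := Fm_nonneg L (r+1)
      calc |1 + (1 + σ r * epsR r)^2 * fF (r+1) L σ / 2|
          ≤ 1 + (1 + σ r * epsR r)^2 * |fF (r+1) L σ| / 2 := by
            have := abs_add_le (1:ℝ) ((1 + σ r * epsR r)^2 * fF (r+1) L σ / 2)
            have h2 : |(1 + σ r * epsR r)^2 * fF (r+1) L σ / 2|
                = (1 + σ r * epsR r)^2 * |fF (r+1) L σ| / 2 := by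
              rw [abs_div, abs_mul, abs_of_nonneg hc0]
              norm_num
            simp at this ⊢
            calc |1 + (1 + σ r * epsR r)^2 * fF (r+1) L σ / 2|
                ≤ |(1:ℝ)| + |(1 + σ r * epsR r)^2 * fF (r+1) L σ / 2| := abs_add_le _ _
              _ = 1 + (1 + σ r * epsR r)^2 * |fF (r+1) L σ| / 2 := by rw [h2, abs_one]
        _ ≤ 1 + (1 + epsR r)^2 * Fm (r+1) L / 2 := by
            have s1 : (1 + σ r * epsR r)^2 * |fF (r+1) L σ| ≤ (1 + epsR r)^2 * Fm (r+1) L := by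
              apply mul_le_mul hc hf (abs_nonneg _) (by positivity)
            linarith

lemma fF_lower {σ : ℕ → ℝ} (hσ : IsSign σ) {r : ℕ} (hr : 1 ≤ r) (L : ℕ) :
    -(1 + (1 - epsR r)^2 * Fm (r+1) L / 2) ≤ fF r (L+1) σ := by
  rw [fF]
  have h1 := epsR_pos r
  have h2 := epsR_lt_one r
  have hf := fF_abs_le hσ L (r+1)
  have hFm := Fm_nonneg L (r+1)
  have hflo : -Fm (r+1) L ≤ fF (r+1) L σ := by
    have := abs_le.mp hf
    linarith [this.1]
  have hfhi : fF (r+1) L σ ≤ Fm (r+1) L := by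
    have := abs_le.mp hf
    linarith [this.2]
  rcases hσ r with h | h
  · rw [h]
    have heps4 := epsR_le_quarter hr
    have hF32 := Fm_le_32_15 L (r := r+1) (by omega)
    have key : epsR r * Fm (r+1) L ≤ 1 := by
      calc epsR r * Fm (r+1) L ≤ (1/4) * (32/15) := by
            apply mul_le_mul heps4 hF32 hFm (by norm_num)
        _ ≤ 1 := by norm_num
    have hc : (0:ℝ) ≤ (1 + epsR r)^2 := sq_nonneg _
    have : (1 + 1 * epsR r)^2 * fF (r+1) L σ ≥ -((1 + epsR r)^2 * Fm (r+1) L) := by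
      rw [one_mul]
      nlinarith [sq_nonneg (1 + epsR r)]
    nlinarith [sq_nonneg (epsR r)]
  · rw [h]
    have : (1 + (-1) * epsR r)^2 = (1 - epsR r)^2 := by ring
    rw [this]
    have hc : (0:ℝ) ≤ (1 - epsR r)^2 := sq_nonneg _
    have : (1 - epsR r)^2 * fF (r+1) L σ ≤ (1 - epsR r)^2 * Fm (r+1) L :=
      mul_le_mul_of_nonneg_left hfhi hc
    nlinarith
end M6

section M7
open Finset

noncomputable def gapv (r L : ℕ) : ℝ := 4*(1/2)^L * ∏ j ∈ Finset.range (L-1), (1 - epsR (r+j))^2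

lemma fF_succ (r L : ℕ) (σ : ℕ → ℝ) :
    fF r (L+1) σ = σ r * (1 + (1 + σ r * epsR r)^2 * fF (r+1) L σ / 2) := rfl

lemma gapv_pos (r L : ℕ) : 0 < gapv r L := by
  unfold gapv
  apply mul_pos (by positivity)
  apply Finset.prod_pos
  intro j _
  exact pow_pos (by linarith [epsR_lt_one (r+j)]) 2

lemma one_sub_eps_sq_le_one (k : ℕ) : (1 - epsR k)^2 ≤ 1 := by
  have h1 := epsR_pos k
  have h2 := epsR_lt_one k
  nlinarith

lemma cross_algebra (ε ε' ε'' G F F' q : ℝ)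
    (hεpos : 0 < ε) (hεlt : ε < 1) (hε'pos : 0 < ε') (hε'lt : ε' < 1)
    (hε''lt : ε'' < 1) (hsq : ε' = ε^2) (hsq' : ε'' = ε'^2)
    (hG0 : 0 ≤ G) (hG : G ≤ 2/(1-ε'') - 2*q)
    (ha : -(1 + (1-ε')^2*G/2) ≤ F) (hb : -(1 + (1-ε')^2*G/2) ≤ F') :
    (1+ε')*(1-ε')^2*q ≤ 1 * (1 + (1 + 1 * ε)^2 * F / 2)
      - (-1) * (1 + (1 + (-1) * ε)^2 * F' / 2) := by
  have hM : 1 + (1-ε')^2*G/2 ≤ 2/(1+ε') - (1-ε')^2*q := by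
    have expand : 1 + (1-ε')^2 * (2/(1-ε'') - 2*q)/2 = 2/(1+ε') - (1-ε')^2*q := by
      rw [hsq']
      have hne : (1:ℝ) - ε'^2 ≠ 0 := by nlinarith
      have hne2 : (1:ℝ) + ε' ≠ 0 := by nlinarith
      field_simp
      ring
    nlinarith [sq_nonneg (1-ε')]
  have h5 : 1 + ε^2 = 1 + ε' := by rw [hsq]
  have hMe : (1+ε^2)*(1 + (1-ε')^2*G/2) ≤ (1+ε^2)*(2/(1+ε') - (1-ε')^2*q) := by
    apply mul_le_mul_of_nonneg_left hM (by nlinarith)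
  have hexp2 : (1+ε^2)*(2/(1+ε') - (1-ε')^2*q) = 2 - (1+ε')*(1-ε')^2*q := by
    rw [h5]
    have hne2 : (1:ℝ) + ε' ≠ 0 := by nlinarith
    field_simp
  have c1 : (0:ℝ) ≤ (1 + ε)^2 := sq_nonneg _
  have c2 : (0:ℝ) ≤ (1 - ε)^2 := sq_nonneg _
  have e1 : (1 + ε)^2 * (-(1 + (1-ε')^2*G/2)) ≤ (1 + ε)^2 * F :=
    mul_le_mul_of_nonneg_left ha c1
  have e2 : (1 - ε)^2 * (-(1 + (1-ε')^2*G/2)) ≤ (1 - ε)^2 * F' :=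
    mul_le_mul_of_nonneg_left hb c2
  have e4 : (1+ε)^2 * (-(1 + (1-ε')^2*G/2)) + (1-ε)^2 * (-(1 + (1-ε')^2*G/2))
      = -(2*((1+ε^2)*(1 + (1-ε')^2*G/2))) := by ring
  have expand_goal : 1 * (1 + (1 + 1 * ε)^2 * F / 2)
      - (-1) * (1 + (1 + (-1) * ε)^2 * F' / 2)
      = 2 + ((1+ε)^2 * F)/2 + ((1-ε)^2 * F')/2 := by ring
  rw [expand_goal]
  linarith [e1, e2, e4, hMe, hexp2.le, hexp2.ge]

lemma fF_cross {σ σ' : ℕ → ℝ} (hσ : IsSign σ) (hσ' : IsSign σ') (r L : ℕ)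
    (h1 : σ r = 1) (h2 : σ' r = -1) :
    2*(1 + epsR (r+1))*(1 - epsR (r+1))^2*(1/2)^L
      ≤ fF r (L+1) σ - fF r (L+1) σ' := by
  induction L with
  | zero =>
      have hx : fF r (0+1) σ = 1 * (1 + (1 + 1 * epsR r)^2 * fF (r+1) 0 σ / 2) := by
        rw [fF_succ, h1]
      have hy : fF r (0+1) σ' = (-1) * (1 + (1 + (-1) * epsR r)^2 * fF (r+1) 0 σ' / 2) := by
        rw [fF_succ, h2]
      have hε'pos := epsR_pos (r+1)
      have hε'lt := epsR_lt_one (r+1)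
      have h3 : 2*(1 + epsR (r+1))*(1 - epsR (r+1))^2*(1/2)^0 ≤ 2 := by
        rw [pow_zero, mul_one]
        nlinarith [mul_nonneg (mul_nonneg hε'pos.le (sub_nonneg.mpr hε'lt.le))
          (by linarith : (0:ℝ) ≤ 1 + epsR (r+1)),
          mul_nonneg hε'pos.le hε'pos.le]
      rw [hx, hy, fF, fF]
      norm_num
      norm_num at h3
      linarith
  | succ L' _ =>
    have hεpos := epsR_pos r
    have hεlt := epsR_lt_one r
    have hε'pos := epsR_pos (r+1)
    have hε'lt := epsR_lt_one (r+1)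
    have hε''lt := epsR_lt_one (r+2)
    have hsq : epsR (r+1) = epsR r^2 := epsR_succ r
    have hsq' : epsR (r+2) = epsR (r+1)^2 := epsR_succ (r+1)
    have ha : -(1 + (1 - epsR (r+1))^2 * Fm (r+2) L' / 2) ≤ fF (r+1) (L'+1) σ :=
      fF_lower hσ (by omega) L'
    have hb : -(1 + (1 - epsR (r+1))^2 * Fm (r+2) L' / 2) ≤ fF (r+1) (L'+1) σ' :=
      fF_lower hσ' (by omega) L'
    have hFm : Fm (r+2) L' ≤ 2/(1 - epsR (r+2)) - 2*(1/2)^L' := Fm_le L' (r+2)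
    have hFm0 : 0 ≤ Fm (r+2) L' := Fm_nonneg L' (r+2)
    have hx : fF r (L'+1+1) σ = 1 * (1 + (1 + 1 * epsR r)^2 * fF (r+1) (L'+1) σ / 2) := by
      rw [fF_succ, h1]
    have hy : fF r (L'+1+1) σ' = (-1) * (1 + (1 + (-1) * epsR r)^2 * fF (r+1) (L'+1) σ' / 2) := by
      rw [fF_succ, h2]
    rw [hx, hy]
    have main := cross_algebra (epsR r) (epsR (r+1)) (epsR (r+2)) (Fm (r+2) L')
      (fF (r+1) (L'+1) σ) (fF (r+1) (L'+1) σ') ((1/2)^L')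
      hεpos hεlt hε'pos hε'lt hε''lt hsq hsq' hFm0 hFm ha hb
    have goal_eq : 2*(1 + epsR (r+1))*(1 - epsR (r+1))^2*(1/2)^(L'+1)
        = (1 + epsR (r+1))*(1 - epsR (r+1))^2*(1/2)^L' := by
      rw [pow_succ]
      ring
    rw [goal_eq]
    exact main

theorem fF_gap {σ σ' : ℕ → ℝ} (hσ : IsSign σ) (hσ' : IsSign σ') (L : ℕ) :
    ∀ r, (∃ t, t < L ∧ σ (r+t) ≠ σ' (r+t)) →
    gapv r L ≤ |fF r L σ - fF r L σ'| := by
  induction L with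
  | zero =>
      rintro r ⟨t, ht, _⟩
      omega
  | succ L ih =>
      rintro r ⟨t, ht, hdiff⟩
      have hεpos := epsR_pos r
      have hεlt := epsR_lt_one r
      by_cases heq : σ r = σ' r
      · -- same first sign
        obtain ⟨t', rfl⟩ : ∃ t', t = t' + 1 := by
          rcases Nat.eq_zero_or_pos t with h | h
          · subst h
            simp only [Nat.add_zero] at hdiff
            exact absurd heq hdiff
          · exact ⟨t - 1, by omega⟩
        have hdiff' : σ ((r+1) + t') ≠ σ' ((r+1) + t') := by
          have h : (r+1) + t' = r + (t'+1) := by ring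
          rw [h]
          exact hdiff
        have hL1 : 1 ≤ L := by omega
        have ihr := ih (r+1) ⟨t', by omega, hdiff'⟩
        have hx : fF r (L+1) σ = σ' r * (1 + (1 + σ' r * epsR r)^2 * fF (r+1) L σ / 2) := by
          rw [fF_succ, heq]
        have hy : fF r (L+1) σ' = σ' r * (1 + (1 + σ' r * epsR r)^2 * fF (r+1) L σ' / 2) := by
          rw [fF_succ]
        rw [hx, hy]
        have habs : |σ' r| = 1 := by rcases hσ' r with h | h <;> rw [h] <;> norm_num
        have hfactor : σ' r * (1 + (1 + σ' r * epsR r)^2 * fF (r+1) L σ / 2)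
            - σ' r * (1 + (1 + σ' r * epsR r)^2 * fF (r+1) L σ' / 2)
            = σ' r * (1 + σ' r * epsR r)^2 * (fF (r+1) L σ - fF (r+1) L σ') / 2 := by
          ring
        rw [hfactor, abs_div, abs_mul, abs_mul, habs, one_mul, abs_pow]
        have hcge : (1 - epsR r)^2 ≤ |1 + σ' r * epsR r|^2 := by
          rw [sq_abs]
          rcases hσ' r with h | h <;> rw [h] <;> nlinarith
        have prodid : gapv r (L+1) = (1 - epsR r)^2 * gapv (r+1) L / 2 := by
          unfold gapv
          obtain ⟨L'', rfl⟩ : ∃ L'', L = L'' + 1 := ⟨L - 1, by omega⟩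
          have e1 : L'' + 1 + 1 - 1 = L'' + 1 := by omega
          have e2 : L'' + 1 - 1 = L'' := by omega
          rw [e1, e2, Finset.prod_range_succ']
          have e3 : ∀ j, r + (j + 1) = (r + 1) + j := by intro j; ring
          have e4 : (∏ j ∈ Finset.range L'', (1 - epsR (r + (j+1)))^2)
              = ∏ j ∈ Finset.range L'', (1 - epsR ((r+1) + j))^2 := by
            apply Finset.prod_congr rfl
            intro j _
            rw [e3]
          rw [e4, add_zero, pow_succ]
          ring
        rw [prodid]
        have habs2 : (0:ℝ) ≤ |fF (r+1) L σ - fF (r+1) L σ'| := abs_nonneg _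
        have step : (1 - epsR r)^2 * gapv (r+1) L
            ≤ |1 + σ' r * epsR r|^2 * |fF (r+1) L σ - fF (r+1) L σ'| := by
          apply mul_le_mul hcge ihr (le_of_lt (gapv_pos _ _)) (by positivity)
        have h2 : |(2:ℝ)| = 2 := by norm_num
        rw [h2]
        linarith
      · -- different first sign
        have key : ∀ (τ τ' : ℕ → ℝ), IsSign τ → IsSign τ' → τ r = 1 → τ' r = -1 →
            gapv r (L+1) ≤ |fF r (L+1) τ - fF r (L+1) τ'| := by
          intro τ τ' hτ hτ' h1 h2
          rcases Nat.eq_zero_or_pos L with hL0 | hL0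
          · subst hL0
            have hfx : fF r 1 τ = τ r := by
              rw [fF_succ, fF]
              ring
            have hfy : fF r 1 τ' = τ' r := by
              rw [fF_succ, fF]
              ring
            rw [hfx, hfy, h1, h2]
            unfold gapv
            norm_num
          obtain ⟨L', rfl⟩ : ∃ L', L = L' + 1 := ⟨L - 1, by omega⟩
          have hcross := fF_cross hτ hτ' r (L'+1) h1 h2
          have hε'pos := epsR_pos (r+1)
          have hε'lt := epsR_lt_one (r+1)
          have hgle : gapv r (L'+1+1) ≤ 2*(1 + epsR (r+1))*(1 - epsR (r+1))^2*(1/2)^(L'+1) := by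
            unfold gapv
            have e2 : L' + 1 + 1 - 1 = L' + 1 := by omega
            rw [e2]
            have hprod : (∏ j ∈ Finset.range (L'+1), (1 - epsR (r+j))^2)
                ≤ (1 + epsR (r+1))*(1 - epsR (r+1))^2 := by
              rcases Nat.eq_zero_or_pos L' with hL1 | hL1
              · subst hL1
                rw [Finset.prod_range_one, add_zero]
                have hsq : epsR (r+1) = epsR r ^2 := epsR_succ r
                have hεp := epsR_pos r
                have hεl := epsR_lt_one r
                rw [hsq]
                nlinarith [sq_nonneg (epsR r), sq_nonneg (1 - epsR r),
                  sq_nonneg (1 + epsR r)]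
              · have hL2 : 2 ≤ L' + 1 := by omega
                have h1mem : 1 ∈ Finset.range (L'+1) := Finset.mem_range.mpr (by omega)
                have hsplit := Finset.mul_prod_erase (Finset.range (L'+1))
                  (fun j => (1 - epsR (r+j))^2) h1mem
                have hrest : (∏ j ∈ (Finset.range (L'+1)).erase 1, (1 - epsR (r+j))^2) ≤ 1 := by
                  apply Finset.prod_le_one
                  · intro j _
                    exact sq_nonneg _
                  · intro j _
                    exact one_sub_eps_sq_le_one _
                have hf1 : (0:ℝ) ≤ (1 - epsR (r+1))^2 := sq_nonneg _
                calc (∏ j ∈ Finset.range (L'+1), (1 - epsR (r+j))^2)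
                    = (1 - epsR (r+1))^2 * ∏ j ∈ (Finset.range (L'+1)).erase 1, (1 - epsR (r+j))^2 :=
                      hsplit.symm
                  _ ≤ (1 - epsR (r+1))^2 * 1 := mul_le_mul_of_nonneg_left hrest hf1
                  _ ≤ (1 + epsR (r+1))*(1 - epsR (r+1))^2 := by nlinarith
            calc 4*(1/2)^(L'+1+1) * ∏ j ∈ Finset.range (L'+1), (1 - epsR (r+j))^2
                ≤ 4*(1/2)^(L'+1+1) * ((1 + epsR (r+1))*(1 - epsR (r+1))^2) := by
                  apply mul_le_mul_of_nonneg_left hprod (by positivity)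
              _ = 2*(1 + epsR (r+1))*(1 - epsR (r+1))^2*(1/2)^(L'+1) := by
                  rw [pow_succ, pow_succ]
                  ring
          have hle : fF r (L'+1+1) τ - fF r (L'+1+1) τ' ≤ |fF r (L'+1+1) τ - fF r (L'+1+1) τ'| :=
            le_abs_self _
          linarith
        rcases hσ r with hx | hx <;> rcases hσ' r with hy | hy
        · exact absurd (hx.trans hy.symm) heq
        · exact key σ σ' hσ hσ' hx hy
        · rw [abs_sub_comm]
          exact key σ' σ hσ' hσ hy hx
        · exact absurd (hx.trans hy.symm) heq

lemma fF_sum (L : ℕ) : ∀ r (σ : ℕ → ℝ),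
    fF r L σ = ∑ k ∈ Finset.range L, (1/2)^k *
      (σ (r+k) * ∏ j ∈ Finset.range k, (σ (r+j) * (1 + σ (r+j) * epsR (r+j))^2)) := by
  induction L with
  | zero => intro r σ; rw [fF]; simp
  | succ L ih =>
      intro r σ
      rw [fF_succ, ih (r+1) σ, Finset.sum_range_succ']
      have hterm : ∀ k ∈ Finset.range L,
          ((1:ℝ)/2)^(k+1) * (σ (r+(k+1)) *
            ∏ j ∈ Finset.range (k+1), (σ (r+j) * (1 + σ (r+j) * epsR (r+j))^2))
          = (σ r * (1 + σ r * epsR r)^2 / 2) * ((1/2)^k * (σ ((r+1)+k) *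
            ∏ j ∈ Finset.range k, (σ ((r+1)+j) * (1 + σ ((r+1)+j) * epsR ((r+1)+j))^2))) := by
        intro k _
        rw [Finset.prod_range_succ']
        have e2 : r + (k+1) = (r+1) + k := by ring
        have e3 : (∏ j ∈ Finset.range k, (σ (r+(j+1)) * (1 + σ (r+(j+1)) * epsR (r+(j+1)))^2))
            = ∏ j ∈ Finset.range k, (σ ((r+1)+j) * (1 + σ ((r+1)+j) * epsR ((r+1)+j))^2) := by
          apply Finset.prod_congr rfl
          intro j _
          have e1 : r + (j+1) = (r+1) + j := by ring
          rw [e1]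
        rw [e2, e3, add_zero, pow_succ]
        ring
      rw [Finset.sum_congr rfl hterm, ← Finset.mul_sum]
      simp only [add_zero, pow_zero, one_mul, Finset.range_zero, Finset.prod_empty, mul_one]
      ring
end M7

section M8
open Finset

lemma epsR_le_geo (N : ℕ) : epsR (3+N) ≤ (1/2:ℝ)^(8+N) := by
  have h : 8 + N ≤ 2^(3+N) := by
    have h1 : N < 2^N := Nat.lt_two_pow_self
    have h2 : 2^(3+N) = 8 * 2^N := by rw [pow_add]; norm_num
    omega
  have := epsR_le_inv_pow (k := 3+N) h
  calc epsR (3+N) ≤ ((2:ℝ)^(8+N))⁻¹ := this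
    _ = (1/2:ℝ)^(8+N) := by rw [one_div, inv_pow]

lemma tail_prod (N : ℕ) :
    1 - ∑ j ∈ Finset.range N, (1/2:ℝ)^(8+j) ≤ ∏ j ∈ Finset.range N, (1 - epsR (3+j)) := by
  induction N with
  | zero => simp
  | succ N ih =>
      rw [Finset.prod_range_succ, Finset.sum_range_succ]
      have he := epsR_le_geo N
      have hep := epsR_pos (3+N)
      have hel := epsR_lt_one (3+N)
      have hS0 : (0:ℝ) ≤ ∑ j ∈ Finset.range N, (1/2:ℝ)^(8+j) :=
        Finset.sum_nonneg fun j _ => by positivity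
      have step : (1 - ∑ j ∈ Finset.range N, (1/2:ℝ)^(8+j)) * (1 - epsR (3+N))
          ≤ (∏ j ∈ Finset.range N, (1 - epsR (3+j))) * (1 - epsR (3+N)) :=
        mul_le_mul_of_nonneg_right ih (by linarith)
      have expand : 1 - (∑ j ∈ Finset.range N, (1/2:ℝ)^(8+j)) - (1/2:ℝ)^(8+N)
          ≤ (1 - ∑ j ∈ Finset.range N, (1/2:ℝ)^(8+j)) * (1 - epsR (3+N)) := by
        have hmul : (∑ j ∈ Finset.range N, (1/2:ℝ)^(8+j)) * epsR (3+N) ≥ 0 :=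
          mul_nonneg hS0 hep.le
        nlinarith
      linarith

lemma tail_sum (N : ℕ) : ∑ j ∈ Finset.range N, (1/2:ℝ)^(8+j) ≤ (1/2)^7 := by
  have h : ∀ j ∈ Finset.range N, (1/2:ℝ)^(8+j) = (1/2)^8 * (1/2)^j := by
    intro j _
    rw [pow_add]
  rw [Finset.sum_congr rfl h, ← Finset.mul_sum]
  have := sum_geometric_two_le N
  have h8 : (0:ℝ) < (1/2)^8 := by positivity
  calc (1/2:ℝ)^8 * ∑ j ∈ Finset.range N, (1/2:ℝ)^j ≤ (1/2)^8 * 2 :=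
        mul_le_mul_of_nonneg_left this h8.le
    _ = (1/2)^7 := by norm_num

lemma prod_head : ∏ j ∈ Finset.range 3, (1 - epsR j) = 45/128 := by
  rw [Finset.prod_range_succ, Finset.prod_range_succ, Finset.prod_range_one]
  have h0 : epsR 0 = 1/2 := by unfold epsR; norm_num
  have h1 : epsR 1 = 1/4 := by unfold epsR; norm_num
  have h2 : epsR 2 = 1/16 := by unfold epsR; norm_num
  rw [h0, h1, h2]
  norm_num

lemma prod_lb {m : ℕ} (hm : 4 ≤ m) :
    (45:ℝ)/128 * (127/128) ≤ ∏ j ∈ Finset.range (m-1), (1 - epsR j) := by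
  obtain ⟨N, hN⟩ : ∃ N, m - 1 = 3 + N := ⟨m - 4, by omega⟩
  rw [hN, Finset.prod_range_add, prod_head]
  have htail : (127:ℝ)/128 ≤ ∏ j ∈ Finset.range N, (1 - epsR (3+j)) := by
    have h1 := tail_prod N
    have h2 := tail_sum N
    have : (127:ℝ)/128 = 1 - (1/2)^7 := by norm_num
    rw [this]
    linarith
  have h45 : (0:ℝ) ≤ 45/128 := by norm_num
  exact mul_le_mul_of_nonneg_left htail h45

lemma gapv_lb {m : ℕ} (hm : 4 ≤ m) :
    4*(1/2:ℝ)^m * (45/128 * (127/128))^2 ≤ gapv 0 m := by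
  unfold gapv
  have hsq : ∏ j ∈ Finset.range (m-1), (1 - epsR (0+j))^2
      = (∏ j ∈ Finset.range (m-1), (1 - epsR j))^2 := by
    rw [← Finset.prod_pow]
    apply Finset.prod_congr rfl
    intro j _
    rw [Nat.zero_add]
  rw [hsq]
  apply mul_le_mul_of_nonneg_left _ (by positivity)
  have hp := prod_lb hm
  have hnn : (0:ℝ) ≤ 45/128 * (127/128) := by norm_num
  exact pow_le_pow_left₀ hnn hp 2
end M8


/-- The first-order Reed-Muller code `RM(m,1)`: evaluation vectors of affine
Boolean polynomials `u₀ + u₁x₁ + ⋯ + u_mx_m`, coordinates indexed by the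
`2^m` evaluation points in lexicographic order. -/
def RM1 (m : ℕ) : Set (Fin (2 ^ m) → Bool) :=
  { x | ∃ (u0 : Bool) (u : Fin m → Bool), ∀ t : Fin (2 ^ m),
      x t = (u0 ^^ decide ((univ.filter fun i : Fin m =>
        u i = true ∧ (t : ℕ).testBit (i : ℕ) = true).card % 2 = 1)) }

/-- For deletion probability `q = 1/2`, the expected numbers of runs in traces of
two distinct `RM(m,1)` codewords sharing the same first bit differ by at least `0.028`. -/
theorem RM1_expected_runs_gap (m : ℕ) (hm : 4 ≤ m) (x y : Fin (2 ^ m) → Bool)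
    (hx : x ∈ RM1 m) (hy : y ∈ RM1 m) (hxy : x ≠ y)
    (hfirst : x ⟨0, by positivity⟩ = y ⟨0, by positivity⟩) :
    0.028 ≤ |(∑ ω : Fin (2 ^ m) → Bool, ((1:ℝ)/2) ^ (2 ^ m) * (numRuns (trc x ω) : ℝ))
      - ∑ ω : Fin (2 ^ m) → Bool, ((1:ℝ)/2) ^ (2 ^ m) * (numRuns (trc y ω) : ℝ)| := by
  obtain ⟨u0x, uX, hXdef⟩ := hx
  obtain ⟨u0y, uY, hYdef⟩ := hy
  have hXfun : ∀ t : Fin (2^m), x t = Xc u0x uX (t : ℕ) := fun t => hXdef t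
  have hYfun : ∀ t : Fin (2^m), y t = Xc u0y uY (t : ℕ) := fun t => hYdef t
  -- u0's agree
  have hu0 : u0x = u0y := by
    have h1 : x ⟨0, by positivity⟩ = u0x := by
      rw [hXfun]
      exact Xc_zero u0x uX
    have h2 : y ⟨0, by positivity⟩ = u0y := by
      rw [hYfun]
      exact Xc_zero u0y uY
    rw [← h1, ← h2, hfirst]
  subst hu0
  -- masks differ
  have hne : ∃ i : Fin m, uX i ≠ uY i := by
    by_contra h
    push_neg at h
    apply hxy
    funext t
    have huXY : uX = uY := funext h
    rw [hXfun, hYfun, huXY]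
  obtain ⟨i, hi⟩ := hne
  -- identify the lists
  have hofX : List.ofFn x = Wl u0x uX m := by
    apply List.ext_getElem
    · simp [Wl]
    · intro n h1 h2
      have hn : n < 2^m := by simpa [Wl] using h2
      rw [List.getElem_ofFn]
      have hr : (Wl u0x uX m)[n] = Xc u0x uX n := by
        simp [Wl]
      rw [hr, hXfun]
  have hofY : List.ofFn y = Wl u0x uY m := by
    apply List.ext_getElem
    · simp [Wl]
    · intro n h1 h2
      rw [List.getElem_ofFn]
      have hr : (Wl u0x uY m)[n] = Xc u0x uY n := by
        simp [Wl]
      rw [hr, hYfun]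
  -- the sums
  have hpow : ((1:ℝ)/2)^(2^m) = (pwR m)⁻¹ := by
    unfold pwR
    rw [one_div, inv_pow]
  have hsx : ∑ ω : Fin (2^m) → Bool, ((1:ℝ)/2)^(2^m) * (numRuns (trc x ω) : ℝ)
      = (pwR m)⁻¹ * aW u0x uX m := by
    rw [← Finset.mul_sum, sum_numRuns, hofX, hpow]
    rfl
  have hsy : ∑ ω : Fin (2^m) → Bool, ((1:ℝ)/2)^(2^m) * (numRuns (trc y ω) : ℝ)
      = (pwR m)⁻¹ * aW u0x uY m := by
    rw [← Finset.mul_sum, sum_numRuns, hofY, hpow]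
    rfl
  have hdiff_ee : (∑ ω : Fin (2^m) → Bool, ((1:ℝ)/2)^(2^m) * (numRuns (trc x ω) : ℝ))
      - (∑ ω : Fin (2^m) → Bool, ((1:ℝ)/2)^(2^m) * (numRuns (trc y ω) : ℝ))
      = ee u0x uX uY m := by
    rw [hsx, hsy]
    unfold ee DD
    rw [div_eq_inv_mul, mul_sub]
  rw [hdiff_ee]
  -- signs
  have hsX : IsSign (sgR uX) := fun n => sgR_cases uX n
  have hsY : IsSign (sgR uY) := fun n => sgR_cases uY n
  have hdiffsig : sgR uX (0 + (i : ℕ)) ≠ sgR uY (0 + (i : ℕ)) := by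
    rw [Nat.zero_add]
    unfold sgR
    rw [dif_pos i.isLt, dif_pos i.isLt]
    have : (⟨(i:ℕ), i.isLt⟩ : Fin m) = i := by
      apply Fin.ext
      rfl
    rw [this]
    cases hX : uX i <;> cases hY : uY i <;> simp_all <;> norm_num
  -- fF sums
  have hfsum : ∀ u : Fin m → Bool, fF 0 m (sgR u)
      = ∑ k ∈ Finset.range m, (1/2:ℝ)^k * rho0 u k := by
    intro u
    rw [fF_sum]
    apply Finset.sum_congr rfl
    intro k _
    unfold rho0 rhoP
    simp only [Nat.zero_add]
  -- solve the recursion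
  have hsolve := ee_solve u0x uX uY (le_refl m)
  have hexp : ∀ j ∈ Finset.range m, (2:ℝ)^(m-1-j) * (rho0 uX j - rho0 uY j)
      = 2^(m-1) * ((1/2:ℝ)^j * (rho0 uX j - rho0 uY j)) := by
    intro j hj
    have hj' : j < m := Finset.mem_range.mp hj
    have key : (2:ℝ)^(m-1-j) * 2^j = 2^(m-1) := by
      rw [← pow_add]
      congr 1
      omega
    have hfact : (2:ℝ)^(m-1-j) = 2^(m-1) * (1/2:ℝ)^j := by
      have h2j : (0:ℝ) < 2^j := by positivity
      rw [one_div, inv_pow]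
      field_simp
      linarith [key]
    rw [hfact]
    ring
  have hstep : ee u0x uX uY m
      = -(1/8) * (2^(m-1) * (fF 0 m (sgR uX) - fF 0 m (sgR uY))) := by
    rw [hsolve]
    have : ∑ j ∈ Finset.range m, (2:ℝ)^(m-1-j) * (rho0 uX j - rho0 uY j)
        = 2^(m-1) * (fF 0 m (sgR uX) - fF 0 m (sgR uY)) := by
      rw [hfsum uX, hfsum uY, ← Finset.sum_sub_distrib, Finset.mul_sum,
        Finset.sum_congr rfl hexp]
      apply Finset.sum_congr rfl
      intro j _
      ring
    rw [this]
  have hgap := fF_gap hsX hsY m 0 ⟨(i:ℕ), i.isLt, hdiffsig⟩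
  have habs : |ee u0x uX uY m|
      = 2^(m-1)/8 * |fF 0 m (sgR uX) - fF 0 m (sgR uY)| := by
    rw [hstep, abs_mul, abs_mul]
    have h1 : |(-(1/8):ℝ)| = 1/8 := by norm_num
    have h2 : |(2:ℝ)^(m-1)| = (2:ℝ)^(m-1) := abs_of_pos (by positivity)
    rw [h1, h2]
    ring
  rw [habs]
  have hg2 := gapv_lb hm
  have hchain : (2:ℝ)^(m-1)/8 * gapv 0 m
      ≤ 2^(m-1)/8 * |fF 0 m (sgR uX) - fF 0 m (sgR uY)| :=
    mul_le_mul_of_nonneg_left hgap (by positivity)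
  have hchain2 : (2:ℝ)^(m-1)/8 * (4*(1/2:ℝ)^m * (45/128 * (127/128))^2)
      ≤ 2^(m-1)/8 * gapv 0 m :=
    mul_le_mul_of_nonneg_left hg2 (by positivity)
  have hiden : (2:ℝ)^(m-1) * (1/2:ℝ)^m = 1/2 := by
    have hmm : (2:ℝ)^m = 2^(m-1) * 2 := by
      rw [← pow_succ]
      congr 1
      omega
    have h2j : (0:ℝ) < 2^(m-1) := by positivity
    rw [one_div, inv_pow, hmm]
    field_simp
  have hnum : (0.028:ℝ) ≤ 2^(m-1)/8 * (4*(1/2:ℝ)^m * (45/128 * (127/128))^2) := by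
    have hval : (2:ℝ)^(m-1)/8 * (4*(1/2:ℝ)^m * (45/128 * (127/128))^2)
        = (2^(m-1) * (1/2:ℝ)^m) * (4/8 * (45/128 * (127/128))^2) := by
      ring
    rw [hval, hiden]
    norm_num
  linarith
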